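/- Let m ≥ 1 and n = 2m. Define γ_i := A_m(i−1) − A_m(i) for i = 1,…,n, let T be the n×n symmetric Toeplitz matrix with entries T[i,j] = γ_{n−|i−j|} (indices 1 ≤ i,j ≤ n, where γ_n is the diagonal entry), and let u ∈ ℝ^n be the vector with u_j = ξ_{min(j, n+1−j) − 1}, i.e. u = (ξ_0, ξ_1, …, ξ_{m−1}, ξ_{m−1}, …, ξ_1, ξ_0). Then T u = u, i.e. u is an eigenvector of T with eigenvalue 1. -/

import Mathlib

/-- `ξ i = C(2i, i) / 4^i`. -/
noncomputable def xi (i : ℕ) : ℝ := (Nat.choose (2 * i) i : ℝ) / 4 ^ i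

/-- `A_m(j) = ∑_{i=0}^{m−j−1} ξ_i ξ_{i+j}` (which is `0` when `j ≥ m`). -/
noncomputable def Am (m j : ℕ) : ℝ := ∑ i ∈ Finset.range (m - j), xi i * xi (i + j)

/-- `toeplitz n γ` is the `n×n` symmetric Toeplitz matrix `Toeplitz(γ_n, …, γ_1)` whose
`(i,j)` entry (for `1 ≤ i, j ≤ n`) is `γ_{n − |i−j|}`. -/
def toeplitz (n : ℕ) (γ : ℕ → ℝ) : Matrix (Fin n) (Fin n) ℝ :=
  Matrix.of fun i j => γ (n - (max (i : ℕ) (j : ℕ) - min (i : ℕ) (j : ℕ)))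


open Finset

lemma xi_zero : xi 0 = 1 := by simp [xi]

lemma xi_rec (i : ℕ) : (2 * (i : ℝ) + 2) * xi (i + 1) = (2 * i + 1) * xi i := by
  have h := Nat.succ_mul_centralBinom_succ i
  have h' : ((i : ℝ) + 1) * (Nat.choose (2 * (i + 1)) (i + 1) : ℝ)
      = 2 * (2 * i + 1) * (Nat.choose (2 * i) i : ℝ) := by
    exact_mod_cast congrArg (Nat.cast : ℕ → ℝ) h
  unfold xi
  have h4 : (4 : ℝ) ^ (i + 1) = 4 ^ i * 4 := by ring
  rw [h4]
  field_simp
  linear_combination (2 : ℝ) * h'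

noncomputable def Sc (k : ℕ) : ℝ := ∑ i ∈ range (k + 1), xi i * xi (k - i)

lemma reflectT (k : ℕ) :
    ∑ i ∈ range (k + 1), ((k - i : ℕ) : ℝ) * (xi i * xi (k - i))
      = ∑ i ∈ range (k + 1), (i : ℝ) * (xi i * xi (k - i)) := by
  rw [← Finset.sum_range_reflect (fun i => (i : ℝ) * (xi i * xi (k - i))) (k + 1)]
  refine Finset.sum_congr rfl fun i hi => ?_
  have hik : i ≤ k := by simpa [Nat.lt_succ_iff] using hi
  have h1 : k + 1 - 1 - i = k - i := by omega
  have h2 : k - (k - i) = i := by omega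
  rw [h1, h2]
  ring

lemma csT (k : ℕ) :
    (k : ℝ) * Sc k = 2 * ∑ i ∈ range (k + 1), (i : ℝ) * (xi i * xi (k - i)) := by
  unfold Sc
  rw [Finset.mul_sum]
  have : ∑ i ∈ range (k + 1), (k : ℝ) * (xi i * xi (k - i))
      = ∑ i ∈ range (k + 1), ((i : ℝ) * (xi i * xi (k - i))
        + ((k - i : ℕ) : ℝ) * (xi i * xi (k - i))) := by
    refine Finset.sum_congr rfl fun i hi => ?_
    have hik : i ≤ k := by simpa [Nat.lt_succ_iff] using hi
    have : ((k - i : ℕ) : ℝ) = (k : ℝ) - i := by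
      push_cast [Nat.cast_sub hik]; ring
    rw [this]; ring
  rw [this, Finset.sum_add_distrib, reflectT]
  ring

lemma conv (q : ℕ) : Sc q = 1 := by
  induction q with
  | zero => simp [Sc, xi_zero]
  | succ n ih =>
    have key : 2 * ∑ i ∈ range (n + 2), (i : ℝ) * (xi i * xi (n + 1 - i))
        = ((n : ℝ) + 1) * Sc n := by
      have h0 : ∑ i ∈ range (n + 2), 2 * (i : ℝ) * (xi i * xi (n + 1 - i))
          = ∑ i ∈ range (n + 1), (2 * (i : ℝ) + 1) * (xi i * xi (n - i)) := by
        rw [Finset.sum_range_succ' (fun i => 2 * (i : ℝ) * (xi i * xi (n + 1 - i))) (n + 1)]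
        simp only [Nat.cast_zero, mul_zero, zero_mul, mul_comm, add_zero]
        refine Finset.sum_congr rfl fun i hi => ?_
        have h1 : n + 1 - (i + 1) = n - i := by omega
        have h2 : (2 * (i : ℝ) + 1) * xi i = (2 * (i : ℝ) + 2) * xi (i + 1) := (xi_rec i).symm
        rw [h1]
        push_cast
        linear_combination (-(xi (n - i))) * h2
      calc 2 * ∑ i ∈ range (n + 2), (i : ℝ) * (xi i * xi (n + 1 - i))
          = ∑ i ∈ range (n + 2), 2 * (i : ℝ) * (xi i * xi (n + 1 - i)) := by
            rw [Finset.mul_sum]; exact Finset.sum_congr rfl fun i _ => by ring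
        _ = ∑ i ∈ range (n + 1), (2 * (i : ℝ) + 1) * (xi i * xi (n - i)) := h0
        _ = 2 * ∑ i ∈ range (n + 1), (i : ℝ) * (xi i * xi (n - i)) + Sc n := by
            rw [Finset.mul_sum, Sc, ← Finset.sum_add_distrib]
            refine Finset.sum_congr rfl fun i hi => ?_; ring
        _ = (n : ℝ) * Sc n + Sc n := by rw [← csT]
        _ = ((n : ℝ) + 1) * Sc n := by ring
    have h1 : ((n : ℝ) + 1) * Sc (n + 1) = ((n : ℝ) + 1) * Sc n := by
      have hc := csT (n + 1)
      push_cast at hc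
      rw [hc]
      exact key
    have hne : ((n : ℝ) + 1) ≠ 0 := by positivity
    rw [ih, mul_one] at h1
    have h2 : ((n : ℝ) + 1) * Sc (n + 1) = ((n : ℝ) + 1) * 1 := by rw [mul_one]; exact h1
    exact mul_left_cancel₀ hne h2

lemma Am_eq_zero {m j : ℕ} (h : m ≤ j) : Am m j = 0 := by
  unfold Am; rw [Nat.sub_eq_zero_of_le h]; simp

lemma G (i : ℕ) : ∀ N, ∑ s ∈ range N, (∑ r ∈ range (N - s), xi r * xi (r + s + i)) * xi s
    = ∑ q ∈ range N, xi (q + i) := by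
  intro N
  induction N with
  | zero => simp
  | succ N ih =>
    have step : ∀ s ∈ range (N + 1),
        (∑ r ∈ range (N + 1 - s), xi r * xi (r + s + i)) * xi s
        = (∑ r ∈ range (N - s), xi r * xi (r + s + i)) * xi s
          + xi (N + i) * (xi s * xi (N - s)) := by
      intro s hs
      have hsN : s ≤ N := by simpa [Nat.lt_succ_iff] using hs
      have h1 : N + 1 - s = (N - s) + 1 := by omega
      rw [h1, Finset.sum_range_succ]
      have h2 : N - s + s + i = N + i := by omega
      rw [h2]; ring
    rw [Finset.sum_congr rfl step, Finset.sum_add_distrib]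
    have hA : ∑ s ∈ range (N + 1), (∑ r ∈ range (N - s), xi r * xi (r + s + i)) * xi s
        = ∑ q ∈ range N, xi (q + i) := by
      rw [Finset.sum_range_succ, Nat.sub_self]
      simpa using ih
    have hB : ∑ s ∈ range (N + 1), xi (N + i) * (xi s * xi (N - s)) = xi (N + i) := by
      rw [← Finset.mul_sum]
      have hc : (∑ s ∈ range (N + 1), xi s * xi (N - s)) = Sc N := rfl
      rw [hc, conv N, mul_one]
    rw [hA, hB, Finset.sum_range_succ]

lemma key_ident (m i : ℕ) (him : i < m) :
    ∑ s ∈ range (m - i), (Am m (s + i) - Am m (s + i + 1)) * xi s = xi i := by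
  have hsplit : ∑ s ∈ range (m - i), (Am m (s + i) - Am m (s + i + 1)) * xi s
      = ∑ s ∈ range (m - i), Am m (s + i) * xi s
        - ∑ s ∈ range (m - i), Am m (s + i + 1) * xi s := by
    rw [← Finset.sum_sub_distrib]
    exact Finset.sum_congr rfl fun s _ => by ring
  have e1 : ∑ s ∈ range (m - i), Am m (s + i) * xi s = ∑ q ∈ range (m - i), xi (q + i) := by
    rw [← G i (m - i)]
    refine Finset.sum_congr rfl fun s hs => ?_
    congr 1
    unfold Am
    have h1 : m - (s + i) = (m - i) - s := by omega
    rw [h1]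
    exact Finset.sum_congr rfl fun r _ => by rw [show r + (s + i) = r + s + i by omega]
  have e2 : ∑ s ∈ range (m - i), Am m (s + i + 1) * xi s
      = ∑ q ∈ range (m - (i + 1)), xi (q + (i + 1)) := by
    have hmi : m - i = (m - (i + 1)) + 1 := by omega
    rw [hmi, Finset.sum_range_succ]
    have hlast : Am m ((m - (i + 1)) + i + 1) = 0 := Am_eq_zero (by omega)
    rw [hlast, zero_mul, add_zero, ← G (i + 1) (m - (i + 1))]
    refine Finset.sum_congr rfl fun s hs => ?_
    congr 1
    unfold Am
    have h1 : m - (s + i + 1) = (m - (i + 1)) - s := by omega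
    rw [h1]
    exact Finset.sum_congr rfl fun r _ => by rw [show r + (s + i + 1) = r + s + (i + 1) by omega]
  rw [hsplit, e1, e2]
  have hmi : m - i = (m - (i + 1)) + 1 := by omega
  rw [hmi, Finset.sum_range_succ' (fun q => xi (q + i)) (m - (i + 1))]
  have : ∀ q, xi (q + 1 + i) = xi (q + (i + 1)) := fun q => by rw [show q + 1 + i = q + (i+1) by omega]
  simp only [this, zero_add]
  ring

lemma row_aux (m : ℕ) (i : ℕ) (hi : i < m) :
    ∑ j ∈ range (2 * m),
      (Am m ((2 * m - (max i j - min i j)) - 1) - Am m (2 * m - (max i j - min i j)))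
        * xi (min j (2 * m - 1 - j)) = xi i := by
  have hsplit : range (2 * m) = range ((i + m) + (m - i)) := by
    congr 1; omega
  rw [hsplit, Finset.sum_range_add]
  have hz : ∑ j ∈ range (i + m),
      (Am m ((2 * m - (max i j - min i j)) - 1) - Am m (2 * m - (max i j - min i j)))
        * xi (min j (2 * m - 1 - j)) = 0 := by
    refine Finset.sum_eq_zero fun j hj => ?_
    have hjm : j < i + m := Finset.mem_range.mp hj
    have h1 : m ≤ (2 * m - (max i j - min i j)) - 1 := by omega
    have h2 : m ≤ 2 * m - (max i j - min i j) := by omega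
    rw [Am_eq_zero h1, Am_eq_zero h2, sub_self, zero_mul]
  rw [hz, zero_add]
  have hterm : ∀ s ∈ range (m - i),
      (Am m ((2 * m - (max i (i + m + s) - min i (i + m + s))) - 1)
        - Am m (2 * m - (max i (i + m + s) - min i (i + m + s))))
        * xi (min (i + m + s) (2 * m - 1 - (i + m + s)))
      = (Am m (m - s - 1) - Am m (m - s)) * xi (m - 1 - i - s) := by
    intro s hs
    have hsb : s < m - i := Finset.mem_range.mp hs
    have h1 : 2 * m - (max i (i + m + s) - min i (i + m + s)) = m - s := by omega
    have h2 : min (i + m + s) (2 * m - 1 - (i + m + s)) = m - 1 - i - s := by omega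
    rw [h1, h2]
  rw [Finset.sum_congr rfl hterm]
  rw [← key_ident m i hi,
    ← Finset.sum_range_reflect (fun s => (Am m (s + i) - Am m (s + i + 1)) * xi s) (m - i)]
  refine Finset.sum_congr rfl fun s hs => ?_
  have hsb : s < m - i := Finset.mem_range.mp hs
  have h1 : (m - i - 1 - s) + i = m - s - 1 := by omega
  have h2 : (m - i - 1 - s) + i + 1 = m - s := by omega
  have h3 : m - i - 1 - s = m - 1 - i - s := by omega
  rw [h2, h1, h3]

/-- Let `m ≥ 1`, `n = 2m`, `γ_i = A_m(i−1) − A_m(i)` for `i = 1, …, n`, let `T` be the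
`n×n` symmetric Toeplitz matrix `Toeplitz(γ_n, …, γ_1)`, and let
`u = (ξ_0, ξ_1, …, ξ_{m−1}, ξ_{m−1}, …, ξ_1, ξ_0)`, i.e. `u_j = ξ_{min(j, n+1−j) − 1}`
for `1 ≤ j ≤ n`.  Then `T u = u`, i.e. `u` is an eigenvector of `T` with eigenvalue `1`. -/
theorem even_eigenvector (m : ℕ) (hm : 1 ≤ m) :
    let n := 2 * m
    let γ : ℕ → ℝ := fun i => Am m (i - 1) - Am m i
    let T := toeplitz n γ
    let u : Fin n → ℝ := fun j => xi (min (j : ℕ) (n - 1 - (j : ℕ)))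
    T.mulVec u = u := by
  intro n γ T u
  funext i
  have hmv : T.mulVec u i = ∑ j : Fin n, γ (n - (max (i : ℕ) (j : ℕ) - min (i : ℕ) (j : ℕ)))
      * xi (min (j : ℕ) (n - 1 - (j : ℕ))) := by
    simp [Matrix.mulVec, dotProduct, T, toeplitz, u]
  rw [hmv]
  rw [Fin.sum_univ_eq_sum_range
    (fun j => γ (n - (max (i : ℕ) j - min (i : ℕ) j)) * xi (min j (n - 1 - j))) n]
  have hin : (i : ℕ) < n := i.isLt
  by_cases hcase : (i : ℕ) < m
  · have :=  row_aux m (i : ℕ) hcase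
    have hui : u i = xi (i : ℕ) := by
      have : min (i : ℕ) (n - 1 - (i : ℕ)) = (i : ℕ) := by
        simp only [n]; omega
      simp [u, this]
    rw [hui]
    simpa [γ, n] using  row_aux m (i : ℕ) hcase
  · set i' := 2 * m - 1 - (i : ℕ) with hi'
    have hi'm : i' < m := by omega
    have hui : u i = xi i' := by
      have : min (i : ℕ) (n - 1 - (i : ℕ)) = i' := by
        simp only [n, hi']; omega
      simp [u, this]
    rw [hui]
    have hcong : ∀ j ∈ range n,
        γ (n - (max (i : ℕ) j - min (i : ℕ) j)) * xi (min j (n - 1 - j))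
        = γ (n - (max i' (n - 1 - j) - min i' (n - 1 - j)))
            * xi (min (n - 1 - j) (n - 1 - (n - 1 - j))) := by
      intro j hj
      have hjn : j < n := Finset.mem_range.mp hj
      have h1 : n - (max (i : ℕ) j - min (i : ℕ) j)
          = n - (max i' (n - 1 - j) - min i' (n - 1 - j)) := by
        simp only [n, hi'] at *; omega
      have h2 : min j (n - 1 - j) = min (n - 1 - j) (n - 1 - (n - 1 - j)) := by
        simp only [n] at *; omega
      rw [h1, h2]
    rw [Finset.sum_congr rfl hcong,
      Finset.sum_range_reflect (fun j => γ (n - (max i' j - min i' j)) * xi (min j (n - 1 - j))) n]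
    simpa [γ, n] using  row_aux m i' hi'm
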